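/- Let {f_i}_{i=1}^{d+1} ⊂ R^d be a simplex ETF (⟨f_i, f_j⟩ = -1/d for i ≠ j), and let B = {B_i}_{i=1}^{b} be a (d+1, k, λ) block design on {1,...,d+1}. Define g_i = (Σ_{j∈B_i} f_j)/||Σ_{j∈B_i} f_j||. Then for all i ≠ j, |⟨g_i, g_j⟩| ≤ (d+1)λ/(k(k-1)) - 1. -/

import Mathlib

open Finset

/-- Double counting: incidences between a point set and a family of blocks. -/
lemma block_dc {α β : Type*} [Fintype β] [DecidableEq α] [DecidableEq β]
    (F : Finset β) (S : β → Finset α) (A : Finset α) :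
    ∑ t ∈ F, (A ∩ S t).card = ∑ y ∈ A, (F.filter (fun t => y ∈ S t)).card := by
  have h1 : ∀ t, (A ∩ S t).card = ∑ y ∈ A, if y ∈ S t then 1 else 0 := by
    intro t
    rw [← Finset.filter_mem_eq_inter, Finset.card_filter]
  rw [Finset.sum_congr rfl (fun t _ => h1 t), Finset.sum_comm]
  exact Finset.sum_congr rfl (fun y _ => (Finset.card_filter _ _).symm)

/-- Double counting for products of intersection sizes. -/
lemma block_dc2 {α β : Type*} [Fintype β] [DecidableEq α] [DecidableEq β]
    (S : β → Finset α) (A C : Finset α) :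
    ∑ t : β, (A ∩ S t).card * (C ∩ S t).card
      = ∑ p ∈ A ×ˢ C, (Finset.univ.filter (fun t => p.1 ∈ S t ∧ p.2 ∈ S t)).card := by
  have h1 : ∀ t, (A ∩ S t).card * (C ∩ S t).card
      = ∑ p ∈ A ×ˢ C, if p.1 ∈ S t ∧ p.2 ∈ S t then 1 else 0 := by
    intro t
    rw [← Finset.card_product, ← Finset.card_filter]
    congr 1
    ext ⟨y, z⟩
    simp only [Finset.mem_product, Finset.mem_inter, Finset.mem_filter]
    tauto
  rw [Finset.sum_congr rfl (fun t _ => h1 t), Finset.sum_comm]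
  exact Finset.sum_congr rfl (fun y _ => (Finset.card_filter _ _).symm)

lemma block_diagcard {α : Type*} [DecidableEq α] (A C : Finset α) :
    ((A ×ˢ C).filter (fun p => p.1 = p.2)).card = (A ∩ C).card := by
  rw [show (A ×ˢ C).filter (fun p => p.1 = p.2) = (A ∩ C).image (fun y => (y, y)) by
    ext ⟨y, z⟩
    simp only [Finset.mem_filter, Finset.mem_product, Finset.mem_image, Finset.mem_inter,
      Prod.mk.injEq]
    constructor
    · rintro ⟨⟨h1, h2⟩, h3⟩
      subst h3
      exact ⟨y, ⟨h1, h2⟩, rfl, rfl⟩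
    · rintro ⟨a, ⟨h1, h2⟩, rfl, rfl⟩
      exact ⟨⟨h1, h2⟩, rfl⟩]
  exact Finset.card_image_of_injective _ (fun a b h => by simpa using h)


lemma aux_cancel (X Y : ℝ) (hY : 0 ≤ Y) (h : X ^ 2 + X ^ 2 ≤ 2 * Y * X) : X ≤ Y := by
  rcases le_or_gt X 0 with h0 | h0
  · linarith
  · nlinarith

lemma aux_RL (K D L R : ℝ) (hK2 : 2 ≤ K) (hKD : K ≤ D) (hL1 : 1 ≤ L)
    (hr5R : R * (K - 1) = D * L) : L ≤ R := by
  nlinarith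

lemma aux_key1 (K D L R M c : ℝ) (hK2 : 2 ≤ K) (hKD : K ≤ D)
    (hr5R : R * (K - 1) = D * L) (hcd : c * (D + 1) = 2 * K * K)
    (hup : K + M - c ≤ R - L) :
    (M * (D + 1) - K * K) * (K - 1) ≤ ((D + 1) * L - K * (K - 1)) * (D + 1 - K) := by
  have hpos : (0 : ℝ) ≤ (D + 1) * (K - 1) := by nlinarith
  have hm1 : M * ((D + 1) * (K - 1)) ≤ (R - L - K + c) * ((D + 1) * (K - 1)) :=
    mul_le_mul_of_nonneg_right (by linarith) hpos
  nlinarith [hm1, hcd, hr5R]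

lemma aux_key2 (K D L R M : ℝ) (hK2 : 2 ≤ K) (hKD : K ≤ D)
    (hr5R : R * (K - 1) = D * L)
    (hlow : K - M ≤ R - L) :
    (K * K - M * (D + 1)) * (K - 1) ≤ ((D + 1) * L - K * (K - 1)) * (D + 1 - K) := by
  have hpos : (0 : ℝ) ≤ (D + 1) * (K - 1) := by nlinarith
  have hm2 : (K - M) * ((D + 1) * (K - 1)) ≤ (R - L) * ((D + 1) * (K - 1)) :=
    mul_le_mul_of_nonneg_right (by linarith) hpos
  nlinarith [hm2, hr5R]

lemma aux_wrap (K D L M : ℝ) (hK2 : 2 ≤ K) (hKD : K ≤ D) (hD0 : 0 < D)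
    (key1 : (M * (D + 1) - K * K) * (K - 1) ≤ ((D + 1) * L - K * (K - 1)) * (D + 1 - K))
    (key2 : (K * K - M * (D + 1)) * (K - 1) ≤ ((D + 1) * L - K * (K - 1)) * (D + 1 - K)) :
    |(M * (1 + 1/D) - K * K / D) / (K * (1 + 1/D) - K * K / D)|
      ≤ (D + 1) * L / (K * (K - 1)) - 1 := by
  have hP : (0 : ℝ) < K * (1 + 1/D) - K * K / D := by
    rw [show K * (1 + 1/D) - K * K / D = K * (D + 1 - K) / D by field_simp]
    apply div_pos (mul_pos (by linarith) (by linarith)) hD0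
  rw [abs_div, abs_of_pos hP, div_le_iff₀ hP, abs_le]
  have hK1 : (0 : ℝ) < K - 1 := by linarith
  have hKK1 : (0 : ℝ) < D * (K - 1) := by positivity
  constructor
  · have heq : (M * (1 + 1/D) - K * K / D)
        + ((D + 1) * L / (K * (K - 1)) - 1) * (K * (1 + 1/D) - K * K / D)
        = (((D + 1) * L - K * (K - 1)) * (D + 1 - K) - (K * K - M * (D + 1)) * (K - 1))
          / (D * (K - 1)) := by
      field_simp
      ring
    have h2 : 0 ≤ (M * (1 + 1/D) - K * K / D)
        + ((D + 1) * L / (K * (K - 1)) - 1) * (K * (1 + 1/D) - K * K / D) := by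
      rw [heq]
      exact div_nonneg (by linarith) (le_of_lt hKK1)
    linarith
  · have heq : ((D + 1) * L / (K * (K - 1)) - 1) * (K * (1 + 1/D) - K * K / D)
        - (M * (1 + 1/D) - K * K / D)
        = (((D + 1) * L - K * (K - 1)) * (D + 1 - K) - (M * (D + 1) - K * K) * (K - 1))
          / (D * (K - 1)) := by
      field_simp
    have h2 : 0 ≤ ((D + 1) * L / (K * (K - 1)) - 1) * (K * (1 + 1/D) - K * K / D)
        - (M * (1 + 1/D) - K * K / D) := by
      rw [heq]
      exact div_nonneg (by linarith) (le_of_lt hKK1)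
    linarith

set_option maxHeartbeats 1000000 in
theorem block_design_coherence_bound (d b k lam : ℕ) (hd : 0 < d) (hk : 2 ≤ k)
    (hkd : k ≤ d) (hlam : 0 < lam)
    (f : Fin (d + 1) → EuclideanSpace ℝ (Fin d))
    (hnorm : ∀ i, ‖f i‖ = 1)
    (hangle : ∀ i j, i ≠ j → (inner ℝ (f i) (f j) : ℝ) = -1 / d)
    (B : Fin b → Finset (Fin (d + 1)))
    (hBcard : ∀ i, (B i).card = k)
    (hpair : ∀ x y : Fin (d + 1), x ≠ y →
      (Finset.univ.filter (fun i => x ∈ B i ∧ y ∈ B i)).card = lam)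
    (g : Fin b → EuclideanSpace ℝ (Fin d))
    (hg : ∀ i, g i = ‖∑ j ∈ B i, f j‖⁻¹ • ∑ j ∈ B i, f j) :
    ∀ i j : Fin b, i ≠ j →
      |(inner ℝ (g i) (g j) : ℝ)| ≤ ((d : ℝ) + 1) * lam / (k * ((k : ℝ) - 1)) - 1 := by
  intro i j hij
  -- Step 1: every point lies in the same number r of blocks
  have hdeg : ∀ x : Fin (d + 1),
      (Finset.univ.filter (fun t => x ∈ B t)).card * (k - 1) = d * lam := by
    intro x
    have e1 := block_dc (Finset.univ.filter (fun t => x ∈ B t)) B (Finset.univ.erase x)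
    have hL : ∀ t ∈ Finset.univ.filter (fun t => x ∈ B t),
        ((Finset.univ.erase x) ∩ B t).card = k - 1 := by
      intro t ht
      simp only [Finset.mem_filter] at ht
      have h2 : (Finset.univ.erase x) ∩ B t = (B t).erase x := by
        ext z
        simp only [Finset.mem_inter, Finset.mem_erase, Finset.mem_univ, true_and, and_true]
      rw [h2, Finset.card_erase_of_mem ht.2, hBcard]
    have hR : ∀ y ∈ Finset.univ.erase x,
        (((Finset.univ.filter (fun t => x ∈ B t)).filter (fun t => y ∈ B t)).card) = lam := by
      intro y hy
      rw [Finset.filter_filter]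
      exact hpair x y (Ne.symm (Finset.mem_erase.mp hy).1)
    rw [Finset.sum_congr rfl hL, Finset.sum_congr rfl hR, Finset.sum_const, Finset.sum_const,
      smul_eq_mul, smul_eq_mul, Finset.card_erase_of_mem (Finset.mem_univ x),
      Finset.card_univ, Fintype.card_fin] at e1
    simp only [Nat.add_sub_cancel] at e1
    exact e1
  set r : ℕ := (Finset.univ.filter (fun t => (0 : Fin (d + 1)) ∈ B t)).card with hrdef
  have hrx : ∀ x, (Finset.univ.filter (fun t => x ∈ B t)).card = r := by
    intro x
    have h1 := hdeg x
    have h2 := hdeg (0 : Fin (d + 1))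
    have hk1 : 0 < k - 1 := by omega
    exact Nat.eq_of_mul_eq_mul_right hk1 (h1.trans h2.symm)
  have hr5 : r * (k - 1) = d * lam := hdeg 0
  -- Step 2: column sums
  have hsum1 : ∀ i' : Fin b, ∑ t : Fin b, (B i' ∩ B t).card = k * r := by
    intro i'
    rw [block_dc Finset.univ B (B i'), Finset.sum_congr rfl (fun y _ => hrx y),
      Finset.sum_const, hBcard, smul_eq_mul]
  -- Step 3: b * k = (d+1) * r
  have hbk : b * k = (d + 1) * r := by
    have e := block_dc (Finset.univ : Finset (Fin b)) B (Finset.univ : Finset (Fin (d + 1)))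
    simp only [Finset.univ_inter] at e
    rw [Finset.sum_congr rfl (fun t _ => hBcard t), Finset.sum_congr rfl (fun y _ => hrx y),
      Finset.sum_const, Finset.sum_const, smul_eq_mul, smul_eq_mul, Finset.card_univ,
      Finset.card_univ, Fintype.card_fin, Fintype.card_fin] at e
    exact e
  -- Step 4: the key quadratic count
  have hprod : ∀ i' j' : Fin b,
      (∑ t : Fin b, (B i' ∩ B t).card * (B j' ∩ B t).card) + (B i' ∩ B j').card * lam
        = (B i' ∩ B j').card * r + k * k * lam := by
    intro i' j'
    rw [block_dc2 B (B i') (B j'),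
      ← Finset.sum_filter_add_sum_filter_not ((B i') ×ˢ (B j')) (fun p => p.1 = p.2)]
    have hA : ∀ p ∈ ((B i') ×ˢ (B j')).filter (fun p => p.1 = p.2),
        (Finset.univ.filter (fun t => p.1 ∈ B t ∧ p.2 ∈ B t)).card = r := by
      intro p hp
      have hp2 : p.1 = p.2 := (Finset.mem_filter.mp hp).2
      rw [show Finset.univ.filter (fun t => p.1 ∈ B t ∧ p.2 ∈ B t)
          = Finset.univ.filter (fun t => p.1 ∈ B t) from by
        ext t; simp [← hp2]]
      exact hrx p.1
    have hB2 : ∀ p ∈ ((B i') ×ˢ (B j')).filter (fun p => ¬ p.1 = p.2),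
        (Finset.univ.filter (fun t => p.1 ∈ B t ∧ p.2 ∈ B t)).card = lam := by
      intro p hp
      exact hpair p.1 p.2 (Finset.mem_filter.mp hp).2
    rw [Finset.sum_congr rfl hA, Finset.sum_congr rfl hB2, Finset.sum_const, Finset.sum_const,
      smul_eq_mul, smul_eq_mul, block_diagcard]
    have hcN : ((((B i') ×ˢ (B j')).filter (fun p => p.1 = p.2)).card)
        + ((((B i') ×ˢ (B j')).filter (fun p => ¬ p.1 = p.2)).card) = k * k := by
      rw [Finset.card_filter_add_card_filter_not, Finset.card_product, hBcard, hBcard]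
    rw [block_diagcard] at hcN
    rw [← hcN]
    ring
  -- Step 5: cast everything to ℝ
  have hK2 : (2 : ℝ) ≤ (k : ℝ) := by exact_mod_cast hk
  have hKD : (k : ℝ) ≤ (d : ℝ) := by exact_mod_cast hkd
  have hL1 : (1 : ℝ) ≤ (lam : ℝ) := by exact_mod_cast hlam
  have hD0 : (0 : ℝ) < (d : ℝ) := by exact_mod_cast hd
  have hM0 : (0 : ℝ) ≤ ((B i ∩ B j).card : ℝ) := by positivity
  have hMK : ((B i ∩ B j).card : ℝ) ≤ (k : ℝ) := by
    have : (B i ∩ B j).card ≤ k := by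
      rw [← hBcard i]; exact Finset.card_le_card Finset.inter_subset_left
    exact_mod_cast this
  have hr5R : (r : ℝ) * ((k : ℝ) - 1) = (d : ℝ) * (lam : ℝ) := by
    have hcast : ((r * (k - 1) : ℕ) : ℝ) = ((d * lam : ℕ) : ℝ) := by exact_mod_cast hr5
    push_cast [Nat.cast_sub (show 1 ≤ k by omega)] at hcast
    linarith [hcast]
  have hbkR : (b : ℝ) * (k : ℝ) = ((d : ℝ) + 1) * (r : ℝ) := by exact_mod_cast hbk
  have HiR : ∑ t : Fin b, ((B i ∩ B t).card : ℝ) = (k : ℝ) * (r : ℝ) := by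
    exact_mod_cast hsum1 i
  have HjR : ∑ t : Fin b, ((B j ∩ B t).card : ℝ) = (k : ℝ) * (r : ℝ) := by
    exact_mod_cast hsum1 j
  have Hii : (∑ t : Fin b, ((B i ∩ B t).card : ℝ) * ((B i ∩ B t).card : ℝ)) + (k : ℝ) * (lam : ℝ)
      = (k : ℝ) * (r : ℝ) + (k : ℝ) * (k : ℝ) * (lam : ℝ) := by
    have h := hprod i i
    rw [Finset.inter_self, hBcard i] at h
    exact_mod_cast h
  have Hjj : (∑ t : Fin b, ((B j ∩ B t).card : ℝ) * ((B j ∩ B t).card : ℝ)) + (k : ℝ) * (lam : ℝ)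
      = (k : ℝ) * (r : ℝ) + (k : ℝ) * (k : ℝ) * (lam : ℝ) := by
    have h := hprod j j
    rw [Finset.inter_self, hBcard j] at h
    exact_mod_cast h
  have Hij : (∑ t : Fin b, ((B i ∩ B t).card : ℝ) * ((B j ∩ B t).card : ℝ))
        + ((B i ∩ B j).card : ℝ) * (lam : ℝ)
      = ((B i ∩ B j).card : ℝ) * (r : ℝ) + (k : ℝ) * (k : ℝ) * (lam : ℝ) := by
    exact_mod_cast hprod i j
  set K : ℝ := (k : ℝ) with hKdef
  set D : ℝ := (d : ℝ) with hDdef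
  set L : ℝ := (lam : ℝ) with hLdef
  set R : ℝ := (r : ℝ) with hRdef
  set M : ℝ := ((B i ∩ B j).card : ℝ) with hMdef
  have hRL : L ≤ R := aux_RL K D L R hK2 hKD hL1 hr5R
  -- Step 6: the two intersection bounds
  have Wii : ((B i ∩ B i).card : ℝ) = K := by rw [Finset.inter_self, hBcard i]
  have Wjj : ((B j ∩ B j).card : ℝ) = K := by rw [Finset.inter_self, hBcard j]
  have Wji : ((B j ∩ B i).card : ℝ) = M := by rw [Finset.inter_comm]
  -- lower bound : K - M ≤ R - L
  have hlow : K - M ≤ R - L := by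
    have t1 : ∑ t ∈ ({i, j} : Finset (Fin b)), (((B i ∩ B t).card : ℝ) - ((B j ∩ B t).card : ℝ))^2
        ≤ ∑ t : Fin b, (((B i ∩ B t).card : ℝ) - ((B j ∩ B t).card : ℝ))^2 :=
      Finset.sum_le_sum_of_subset_of_nonneg (Finset.subset_univ _) (fun t _ _ => sq_nonneg _)
    rw [Finset.sum_pair hij, Wii, Wjj, Wji] at t1
    have expand : ∑ t : Fin b, (((B i ∩ B t).card : ℝ) - ((B j ∩ B t).card : ℝ))^2
        = (∑ t : Fin b, ((B i ∩ B t).card : ℝ) * ((B i ∩ B t).card : ℝ))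
          - 2 * (∑ t : Fin b, ((B i ∩ B t).card : ℝ) * ((B j ∩ B t).card : ℝ))
          + ∑ t : Fin b, ((B j ∩ B t).card : ℝ) * ((B j ∩ B t).card : ℝ) := by
      rw [Finset.mul_sum, ← Finset.sum_sub_distrib, ← Finset.sum_add_distrib]
      exact Finset.sum_congr rfl (fun t _ => by ring)
    have e2 : ∑ t : Fin b, (((B i ∩ B t).card : ℝ) - ((B j ∩ B t).card : ℝ))^2
        = 2 * (R - L) * (K - M) := by
      rw [expand]; linear_combination Hii + Hjj - 2 * Hij
    rw [e2] at t1
    have hrr : (M - K)^2 = (K - M)^2 := by ring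
    refine aux_cancel (K - M) (R - L) (by linarith [hRL]) ?_
    linarith only [t1, hrr]
  -- upper bound : K + M - c ≤ R - L  with c = 2K²/(D+1)
  set c : ℝ := 2 * K * K / (D + 1) with hcdef
  have hD1 : (D : ℝ) + 1 ≠ 0 := by linarith
  have hcd : c * (D + 1) = 2 * K * K := by
    rw [hcdef, div_mul_cancel₀ _ hD1]
  have hK0 : K ≠ 0 := by linarith
  have hbc : (b : ℝ) * c^2 = 2 * c * K * R := by
    apply mul_left_cancel₀ hK0
    linear_combination c^2 * hbkR + c * R * hcd
  have h4L : 4 * K * K * L = 2 * c * K * R - 2 * c * R + 2 * c * L := by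
    linear_combination (-2) * L * hcd + (-2) * c * hr5R
  have hup : K + M - c ≤ R - L := by
    have t2 : ∑ t ∈ ({i, j} : Finset (Fin b)),
          (((B i ∩ B t).card : ℝ) + ((B j ∩ B t).card : ℝ) - c)^2
        ≤ ∑ t : Fin b, (((B i ∩ B t).card : ℝ) + ((B j ∩ B t).card : ℝ) - c)^2 :=
      Finset.sum_le_sum_of_subset_of_nonneg (Finset.subset_univ _) (fun t _ _ => sq_nonneg _)
    rw [Finset.sum_pair hij, Wii, Wjj, Wji] at t2
    have expand2 : ∑ t : Fin b, (((B i ∩ B t).card : ℝ) + ((B j ∩ B t).card : ℝ) - c)^2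
        = (∑ t : Fin b, ((B i ∩ B t).card : ℝ) * ((B i ∩ B t).card : ℝ))
          + (∑ t : Fin b, ((B j ∩ B t).card : ℝ) * ((B j ∩ B t).card : ℝ))
          + 2 * (∑ t : Fin b, ((B i ∩ B t).card : ℝ) * ((B j ∩ B t).card : ℝ))
          - 2 * c * (∑ t : Fin b, ((B i ∩ B t).card : ℝ))
          - 2 * c * (∑ t : Fin b, ((B j ∩ B t).card : ℝ))
          + (b : ℝ) * c^2 := by
      rw [Finset.mul_sum, Finset.mul_sum, Finset.mul_sum,
        show ((b : ℝ) * c^2) = ∑ _t : Fin b, c^2 by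
          rw [Finset.sum_const, Finset.card_univ, Fintype.card_fin, nsmul_eq_mul],
        ← Finset.sum_add_distrib, ← Finset.sum_add_distrib, ← Finset.sum_sub_distrib,
        ← Finset.sum_sub_distrib, ← Finset.sum_add_distrib]
      exact Finset.sum_congr rfl (fun t _ => by ring)
    have e3 : ∑ t : Fin b, (((B i ∩ B t).card : ℝ) + ((B j ∩ B t).card : ℝ) - c)^2
        = 2 * (R - L) * (K + M - c) := by
      rw [expand2]
      linear_combination Hii + Hjj + 2 * Hij - 2 * c * HiR - 2 * c * HjR + hbc + h4L
    rw [e3] at t2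
    have hrr : (M + K - c)^2 = (K + M - c)^2 := by ring
    refine aux_cancel (K + M - c) (R - L) (by linarith [hRL]) ?_
    linarith only [t2, hrr]
  -- Step 7: the two polynomial key inequalities
  have key1 := aux_key1 K D L R M c hK2 hKD hr5R hcd hup
  have key2 := aux_key2 K D L R M hK2 hKD hr5R hlow
  -- Step 8: inner products
  have hIP : ∀ i' j' : Fin b,
      (inner ℝ (∑ y ∈ B i', f y) (∑ z ∈ B j', f z) : ℝ)
        = ((B i' ∩ B j').card : ℝ) * (1 + 1/D) - K * K / D := by
    intro i' j'
    rw [sum_inner]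
    have h1 : ∀ y ∈ B i', (inner ℝ (f y) (∑ z ∈ B j', f z) : ℝ)
        = (if y ∈ B j' then (1 + 1/D) else 0) + K * (-1/D) := by
      intro y _
      rw [inner_sum]
      have h2 : ∀ z ∈ B j', (inner ℝ (f y) (f z) : ℝ)
          = (if z = y then (1 + 1/D) else 0) + (-1/D) := by
        intro z _
        by_cases h : z = y
        · subst h
          rw [real_inner_self_eq_norm_sq, hnorm, if_pos rfl]
          ring
        · rw [hangle y z (fun hh => h hh.symm)]
          simp [h]
      rw [Finset.sum_congr rfl h2, Finset.sum_add_distrib, Finset.sum_const, hBcard,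
        Finset.sum_ite_eq', nsmul_eq_mul]
    rw [Finset.sum_congr rfl h1, Finset.sum_add_distrib, Finset.sum_const, hBcard,
      Finset.sum_ite_mem, Finset.sum_const, nsmul_eq_mul, nsmul_eq_mul]
    push_cast
    ring
  set P : ℝ := K * (1 + 1/D) - K * K / D with hPdef
  have hPval : P = K * (D + 1 - K) / D := by rw [hPdef]; field_simp
  have hP : 0 < P := by
    rw [hPval]
    apply div_pos (mul_pos (by linarith) (by linarith)) hD0
  have hNormSq : ∀ i' : Fin b, ‖∑ y ∈ B i', f y‖^2 = P := by
    intro i'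
    rw [← real_inner_self_eq_norm_sq, hIP i' i', Finset.inter_self, hBcard i']
  have hNi : ‖∑ y ∈ B i, f y‖ = Real.sqrt P := by
    rw [← hNormSq i]; exact (Real.sqrt_sq (norm_nonneg _)).symm
  have hNj : ‖∑ y ∈ B j, f y‖ = Real.sqrt P := by
    rw [← hNormSq j]; exact (Real.sqrt_sq (norm_nonneg _)).symm
  have hval : (inner ℝ (g i) (g j) : ℝ) = (M * (1 + 1/D) - K * K / D) / P := by
    have hss : Real.sqrt P * Real.sqrt P = P := Real.mul_self_sqrt (le_of_lt hP)
    rw [hg i, hg j, real_inner_smul_left, real_inner_smul_right, hIP i j, hNi, hNj]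
    conv_rhs => rw [← hss]
    ring
  rw [hval]
  exact aux_wrap K D L M hK2 hKD hD0 key1 key2
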